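/- Define h(x) = ((1+x)²/(4x))·log₂((1+x)²/(4x)) − ((1−x)²/(4x))·log₂((1−x)²/(4x)) for x ∈ (0,1]. Then h(1) = 0 and h is strictly decreasing on (0,1]. -/

import Mathlib

/-- The auxiliary entropy function `h`. -/
noncomputable def hAux (x : ℝ) : ℝ :=
  (1 + x) ^ 2 / (4 * x) * Real.logb 2 ((1 + x) ^ 2 / (4 * x)) -
    (1 - x) ^ 2 / (4 * x) * Real.logb 2 ((1 - x) ^ 2 / (4 * x))

open Real Set

lemma hAux_eq : hAux = fun x : ℝ =>
    ((1 + x) ^ 2 / (4 * x) * Real.log ((1 + x) ^ 2 / (4 * x)) -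
      (1 - x) ^ 2 / (4 * x) * Real.log ((1 - x) ^ 2 / (4 * x))) / Real.log 2 := by
  funext x
  simp [hAux, Real.logb]
  ring

lemma hAux_hasDerivAt {x : ℝ} (hx : x ∈ Set.Ioo (0 : ℝ) 1) :
    HasDerivAt hAux
      ((x ^ 2 - 1) / (4 * x ^ 2) *
        (Real.log ((1 + x) ^ 2 / (4 * x)) - Real.log ((1 - x) ^ 2 / (4 * x))) / Real.log 2) x := by
  obtain ⟨hx0, hx1⟩ := hx
  have hxne : x ≠ 0 := ne_of_gt hx0
  have h4x : (4 : ℝ) * x ≠ 0 := by positivity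
  have hFpos : (0 : ℝ) < (1 + x) ^ 2 / (4 * x) := by positivity
  have hGpos : (0 : ℝ) < (1 - x) ^ 2 / (4 * x) := by
    have : (0:ℝ) < 1 - x := by linarith
    positivity
  have hF := (((hasDerivAt_id x).const_add 1).pow 2).div ((hasDerivAt_id x).const_mul 4) h4x
  have hG := (((hasDerivAt_id x).const_sub 1).pow 2).div ((hasDerivAt_id x).const_mul 4) h4x
  simp only [id_eq] at hF hG
  have hmF := (Real.hasDerivAt_mul_log hFpos.ne').comp x hF
  have hmG := (Real.hasDerivAt_mul_log hGpos.ne').comp x hG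
  have h : HasDerivAt _ _ x := (hmF.sub hmG).div_const (Real.log 2)
  simp only [Function.comp_def, Pi.div_apply, Pi.pow_apply] at h
  rw [hAux_eq]
  refine h.congr_deriv ?_
  set L1 := Real.log ((1 + x) ^ 2 / (4 * x)) with hL1
  set L2 := Real.log ((1 - x) ^ 2 / (4 * x)) with hL2
  push_cast
  field_simp
  ring

theorem hAux_one_and_strictAnti :
    hAux 1 = 0 ∧ StrictAntiOn hAux (Set.Ioc (0 : ℝ) 1) := by
  constructor
  · norm_num [hAux]
  · have hconv : Convex ℝ (Set.Ioc (0 : ℝ) 1) := convex_Ioc 0 1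
    have hcont : ContinuousOn hAux (Set.Ioc (0 : ℝ) 1) := by
      rw [hAux_eq]
      apply ContinuousOn.div_const
      apply ContinuousOn.sub
      · exact Real.continuous_mul_log.comp_continuousOn
          (ContinuousOn.div (by fun_prop) (by fun_prop)
            (fun x hx => by have := hx.1; positivity))
      · exact Real.continuous_mul_log.comp_continuousOn
          (ContinuousOn.div (by fun_prop) (by fun_prop)
            (fun x hx => by have := hx.1; positivity))
    have hint : interior (Set.Ioc (0 : ℝ) 1) = Set.Ioo (0 : ℝ) 1 := interior_Ioc
    apply strictAntiOn_of_deriv_neg hconv hcont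
    intro x hx
    rw [hint] at hx
    rw [(hAux_hasDerivAt hx).deriv]
    obtain ⟨hx0, hx1⟩ := hx
    have h1 : (x ^ 2 - 1) / (4 * x ^ 2) < 0 := by
      apply div_neg_of_neg_of_pos
      · nlinarith
      · positivity
    have hGpos : (0 : ℝ) < (1 - x) ^ 2 / (4 * x) := by
      have : (0:ℝ) < 1 - x := by linarith
      positivity
    have hlt : (1 - x) ^ 2 / (4 * x) < (1 + x) ^ 2 / (4 * x) := by
      apply div_lt_div_of_pos_right ?_ (by positivity)
      nlinarith
    have hlog : Real.log ((1 - x) ^ 2 / (4 * x)) < Real.log ((1 + x) ^ 2 / (4 * x)) :=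
      Real.log_lt_log hGpos hlt
    have hlog2 : (0:ℝ) < Real.log 2 := Real.log_pos (by norm_num)
    apply div_neg_of_neg_of_pos _ hlog2
    exact mul_neg_of_neg_of_pos h1 (by linarith)
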